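/- Let a, b ∈ ℝ and let I, J ⊆ ℝ be open intervals such that 1 + a·e^{2x} < 0 for all x ∈ I and 1 + b·e^{2y} < 0 for all y ∈ J. Let w : I × J → ℝ be differentiable with ∂w/∂x = w + √((1 + b·e^{2y})/(1 + a·e^{2x})) and ∂w/∂y = w + √((1 + a·e^{2x})/(1 + b·e^{2y})) at every (x,y) ∈ I × J. Then there exists a constant η ∈ ℝ such that w(x,y) = √((1 + a·e^{2x})(1 + b·e^{2y})) + η·e^{x+y} for all (x,y) ∈ I × J. -/

import Mathlib

private lemma aux_const_neg (a C : ℝ) (I : Set ℝ) (hIopen : IsOpen I) (hIconn : I.OrdConnected)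
    (ha : ∀ x ∈ I, 1 + a * Real.exp (2 * x) < 0) (hC : C < 0)
    (f : ℝ → ℝ)
    (hf : ∀ x ∈ I, HasDerivAt f (f x + Real.sqrt (C / (1 + a * Real.exp (2 * x)))) x) :
    ∀ x₁ ∈ I, ∀ x₂ ∈ I,
      (f x₁ - Real.sqrt ((1 + a * Real.exp (2 * x₁)) * C)) * Real.exp (-x₁)
        = (f x₂ - Real.sqrt ((1 + a * Real.exp (2 * x₂)) * C)) * Real.exp (-x₂) := by
  set g : ℝ → ℝ := fun x => (f x - Real.sqrt ((1 + a * Real.exp (2 * x)) * C)) * Real.exp (-x)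
    with hg_def
  have hg : ∀ x ∈ I, HasDerivAt g 0 x := by
    intro x hxI
    set A : ℝ := 1 + a * Real.exp (2 * x) with hA_def
    have hA : A < 0 := ha x hxI
    have hAC : 0 < A * C := mul_pos_of_neg_of_neg hA hC
    set S : ℝ := Real.sqrt (A * C) with hS_def
    have hSpos : 0 < S := Real.sqrt_pos.2 hAC
    have hS2 : S ^ 2 = A * C := Real.sq_sqrt hAC.le
    -- sqrt(C/A) = -C/S
    have hAne : A ≠ 0 := ne_of_lt hA
    have hratio : Real.sqrt (C / A) = -C / S := by
      have h1 : C / A = (-C / S) ^ 2 := by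
        rw [neg_div, neg_sq, div_pow, hS2, div_eq_div_iff hAne (ne_of_gt hAC)]
        ring
      rw [h1, Real.sqrt_sq (le_of_lt (div_pos (neg_pos.2 hC) hSpos))]
    -- derivatives
    have hlin : HasDerivAt (fun t : ℝ => 2 * t) 2 x := by
      simpa using (hasDerivAt_id x).const_mul 2
    have hexp2 : HasDerivAt (fun t : ℝ => Real.exp (2 * t)) (Real.exp (2 * x) * 2) x :=
      (Real.hasDerivAt_exp (2 * x)).comp x hlin
    have hinner : HasDerivAt (fun t : ℝ => (1 + a * Real.exp (2 * t)) * C)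
        (a * (Real.exp (2 * x) * 2) * C) x :=
      (((hexp2.const_mul a).const_add 1).mul_const C)
    have hsqrt : HasDerivAt (fun t : ℝ => Real.sqrt ((1 + a * Real.exp (2 * t)) * C))
        (1 / (2 * S) * (a * (Real.exp (2 * x) * 2) * C)) x := by
      have h0 : A * C ≠ 0 := ne_of_gt hAC
      exact (Real.hasDerivAt_sqrt h0).comp x hinner
    have hexpneg : HasDerivAt (fun t : ℝ => Real.exp (-t)) (-Real.exp (-x)) x := by
      have hneg : HasDerivAt (fun t : ℝ => -t) (-1) x := (hasDerivAt_id x).neg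
      exact ((Real.hasDerivAt_exp (-x)).comp x hneg).congr_deriv (by ring)
    have hD : HasDerivAt g
        (((f x + Real.sqrt (C / A)) - 1 / (2 * S) * (a * (Real.exp (2 * x) * 2) * C))
            * Real.exp (-x)
          + (f x - S) * (-Real.exp (-x))) x :=
      (((hf x hxI).sub hsqrt).mul hexpneg)
    have hzero : ((f x + Real.sqrt (C / A)) - 1 / (2 * S) * (a * (Real.exp (2 * x) * 2) * C))
            * Real.exp (-x) + (f x - S) * (-Real.exp (-x)) = 0 := by
      rw [hratio,
        show a * (Real.exp (2 * x) * 2) * C = (A - 1) * 2 * C by rw [hA_def]; ring]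
      have hSne : S ≠ 0 := ne_of_gt hSpos
      have h3 : -C / S - 1 / (2 * S) * ((A - 1) * 2 * C) + S = 0 := by
        field_simp
        nlinarith [hS2]
      have h4 : (f x + -C / S - 1 / (2 * S) * ((A - 1) * 2 * C)) * Real.exp (-x)
          + (f x - S) * (-Real.exp (-x))
          = (-C / S - 1 / (2 * S) * ((A - 1) * 2 * C) + S) * Real.exp (-x) := by
        ring
      rw [h4, h3, zero_mul]
    rw [← hzero]; exact hD
  intro x₁ hx₁ x₂ hx₂
  have hconv : Convex ℝ I := hIconn.convex
  refine hconv.is_const_of_fderivWithin_eq_zero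
    (fun x hxI => (hg x hxI).differentiableAt.differentiableWithinAt) (fun x hxI => ?_) hx₁ hx₂
  rw [fderivWithin_of_isOpen hIopen hxI]
  exact (hg x hxI).hasFDerivAt.fderiv.trans (by ext; simp)

theorem linear_system_sqrt_pos_negfactors (a b : ℝ) (I J : Set ℝ)
    (hIopen : IsOpen I) (hIconn : I.OrdConnected)
    (hJopen : IsOpen J) (hJconn : J.OrdConnected)
    (ha : ∀ x ∈ I, 1 + a * Real.exp (2 * x) < 0)
    (hb : ∀ y ∈ J, 1 + b * Real.exp (2 * y) < 0)
    (w : ℝ × ℝ → ℝ)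
    (hdiff : ∀ p ∈ I ×ˢ J, DifferentiableAt ℝ w p)
    (hx : ∀ x ∈ I, ∀ y ∈ J, deriv (fun t => w (t, y)) x =
      w (x, y) + Real.sqrt ((1 + b * Real.exp (2 * y)) / (1 + a * Real.exp (2 * x))))
    (hy : ∀ x ∈ I, ∀ y ∈ J, deriv (fun s => w (x, s)) y =
      w (x, y) + Real.sqrt ((1 + a * Real.exp (2 * x)) / (1 + b * Real.exp (2 * y)))) :
    ∃ η : ℝ, ∀ x ∈ I, ∀ y ∈ J,
      w (x, y) = Real.sqrt ((1 + a * Real.exp (2 * x)) * (1 + b * Real.exp (2 * y)))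
        + η * Real.exp (x + y) := by
  rcases Set.eq_empty_or_nonempty I with hIe | ⟨x₀, hx₀⟩
  · exact ⟨0, fun x hxI => absurd hxI (by simp [hIe])⟩
  rcases Set.eq_empty_or_nonempty J with hJe | ⟨y₀, hy₀⟩
  · exact ⟨0, fun x _ y hyJ => absurd hyJ (by simp [hJe])⟩
  -- slice derivatives
  have hdx : ∀ x ∈ I, ∀ y ∈ J, HasDerivAt (fun t => w (t, y))
      (w (x, y) + Real.sqrt ((1 + b * Real.exp (2 * y)) / (1 + a * Real.exp (2 * x)))) x := by
    intro x hxI y hyJ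
    have hsl : DifferentiableAt ℝ (fun t : ℝ => (t, y)) x :=
      differentiableAt_id.prodMk (differentiableAt_const y)
    have hd : DifferentiableAt ℝ (fun t => w (t, y)) x :=
      (hdiff (x, y) (Set.mk_mem_prod hxI hyJ)).comp x hsl
    have := hd.hasDerivAt
    rwa [hx x hxI y hyJ] at this
  have hdy : ∀ x ∈ I, ∀ y ∈ J, HasDerivAt (fun s => w (x, s))
      (w (x, y) + Real.sqrt ((1 + a * Real.exp (2 * x)) / (1 + b * Real.exp (2 * y)))) y := by
    intro x hxI y hyJ
    have hsl : DifferentiableAt ℝ (fun s : ℝ => (x, s)) y :=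
      (differentiableAt_const x).prodMk differentiableAt_id
    have hd : DifferentiableAt ℝ (fun s => w (x, s)) y :=
      (hdiff (x, y) (Set.mk_mem_prod hxI hyJ)).comp y hsl
    have := hd.hasDerivAt
    rwa [hy x hxI y hyJ] at this
  refine ⟨(w (x₀, y₀) - Real.sqrt ((1 + a * Real.exp (2 * x₀)) * (1 + b * Real.exp (2 * y₀))))
    * Real.exp (-(x₀ + y₀)), fun x hxI y hyJ => ?_⟩
  -- constancy in x at fixed y
  have h1 := aux_const_neg a (1 + b * Real.exp (2 * y)) I hIopen hIconn ha (hb y hyJ)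
    (fun t => w (t, y)) (fun t htI => hdx t htI y hyJ) x hxI x₀ hx₀
  -- constancy in y at fixed x₀
  have h2 := aux_const_neg b (1 + a * Real.exp (2 * x₀)) J hJopen hJconn hb (ha x₀ hx₀)
    (fun s => w (x₀, s)) (fun s hsJ => hdy x₀ hx₀ s hsJ) y hyJ y₀ hy₀
  -- combine
  have hkey : (w (x, y) - Real.sqrt ((1 + a * Real.exp (2 * x)) * (1 + b * Real.exp (2 * y))))
      * Real.exp (-(x + y))
      = (w (x₀, y₀) - Real.sqrt ((1 + a * Real.exp (2 * x₀)) * (1 + b * Real.exp (2 * y₀))))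
        * Real.exp (-(x₀ + y₀)) := by
    have e1 : Real.exp (-(x + y)) = Real.exp (-x) * Real.exp (-y) := by
      rw [← Real.exp_add, neg_add]
    have e2 : Real.exp (-(x₀ + y₀)) = Real.exp (-x₀) * Real.exp (-y₀) := by
      rw [← Real.exp_add, neg_add]
    have hc1 : Real.sqrt ((1 + b * Real.exp (2 * y)) * (1 + a * Real.exp (2 * x₀)))
        = Real.sqrt ((1 + a * Real.exp (2 * x₀)) * (1 + b * Real.exp (2 * y))) := by
      rw [mul_comm]
    have hc2 : Real.sqrt ((1 + b * Real.exp (2 * y₀)) * (1 + a * Real.exp (2 * x₀)))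
        = Real.sqrt ((1 + a * Real.exp (2 * x₀)) * (1 + b * Real.exp (2 * y₀))) := by
      rw [mul_comm]
    rw [e1, e2]
    calc (w (x, y) - Real.sqrt ((1 + a * Real.exp (2 * x)) * (1 + b * Real.exp (2 * y))))
          * (Real.exp (-x) * Real.exp (-y))
        = ((w (x, y) - Real.sqrt ((1 + a * Real.exp (2 * x)) * (1 + b * Real.exp (2 * y))))
          * Real.exp (-x)) * Real.exp (-y) := by ring
      _ = ((w (x₀, y) - Real.sqrt ((1 + a * Real.exp (2 * x₀)) * (1 + b * Real.exp (2 * y))))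
          * Real.exp (-x₀)) * Real.exp (-y) := by rw [h1]
      _ = ((w (x₀, y) - Real.sqrt ((1 + b * Real.exp (2 * y)) * (1 + a * Real.exp (2 * x₀))))
          * Real.exp (-y)) * Real.exp (-x₀) := by rw [hc1]; ring
      _ = ((w (x₀, y₀) - Real.sqrt ((1 + b * Real.exp (2 * y₀)) * (1 + a * Real.exp (2 * x₀))))
          * Real.exp (-y₀)) * Real.exp (-x₀) := by rw [h2]
      _ = (w (x₀, y₀) - Real.sqrt ((1 + a * Real.exp (2 * x₀)) * (1 + b * Real.exp (2 * y₀))))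
          * (Real.exp (-x₀) * Real.exp (-y₀)) := by rw [hc2]; ring
  rw [Real.exp_neg] at hkey
  have hEne : Real.exp (x + y) ≠ 0 := (Real.exp_pos _).ne'
  field_simp at hkey
  linarith
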